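/- Suppose the real sequence (α_n)_{n≥0} satisfies the structure relation with (a_k), i.e. for every n ≥ 0: [n]_q a_n = Σ_{k=0}^{n} [n choose k]_q q^{n-k} α_k a_{n-k}. Then for every integer n ≥ 1 the q-Appell polynomial A_{n,q} satisfies the q-difference equation Σ_{k=0}^{n} (q^{n-k} α_k / [k]_q!) · D_q^k A_{n,q}(x) + x q^n D_q A_{n,q}(x) − [n]_q A_{n,q}(qx) = 0, as an identity of real polynomials in x. -/

import Mathlib

open Polynomial Finset

/-- The q-integer [n]_q = 1 + q + ... + q^(n-1). -/
noncomputable def qInt (q : ℝ) (n : ℕ) : ℝ := ∑ i ∈ Finset.range n, q ^ i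

/-- The q-factorial [n]_q! = [1]_q [2]_q ... [n]_q, with [0]_q! = 1. -/
noncomputable def qFact (q : ℝ) : ℕ → ℝ
  | 0 => 1
  | n + 1 => qFact q n * qInt q (n + 1)

/-- The q-binomial coefficient [n choose k]_q = [n]_q! / ([k]_q! [n-k]_q!). -/
noncomputable def qBinom (q : ℝ) (n k : ℕ) : ℝ := qFact q n / (qFact q k * qFact q (n - k))

/-- The q-derivative on real polynomials, determined by D_q(x^n) = [n]_q x^(n-1). -/
noncomputable def qDeriv (q : ℝ) (p : Polynomial ℝ) : Polynomial ℝ :=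
  p.sum fun n a => Polynomial.C (a * qInt q n) * Polynomial.X ^ (n - 1)

/-- The q-Appell polynomials attached to the sequence (a_k):
`A_{n,q}(x) = Σ_{k=0}^{n} [n choose k]_q a_k x^(n-k)`. -/
noncomputable def qAppell (q : ℝ) (a : ℕ → ℝ) (n : ℕ) : Polynomial ℝ :=
  ∑ k ∈ Finset.range (n + 1), Polynomial.C (qBinom q n k * a k) * Polynomial.X ^ (n - k)

lemma qInt_zero (q : ℝ) : qInt q 0 = 0 := by simp [qInt]

lemma qInt_pos {q : ℝ} (hq0 : 0 < q) {n : ℕ} (hn : 1 ≤ n) : 0 < qInt q n := by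
  apply Finset.sum_pos (fun i _ => pow_pos hq0 i)
  exact Finset.nonempty_range_iff.mpr (by omega)

lemma qFact_succ (q : ℝ) (n : ℕ) : qFact q (n + 1) = qFact q n * qInt q (n + 1) := rfl

lemma qFact_pos {q : ℝ} (hq0 : 0 < q) (n : ℕ) : 0 < qFact q n := by
  induction n with
  | zero => norm_num [qFact]
  | succ n ih => rw [qFact_succ]; exact mul_pos ih (qInt_pos hq0 (by omega))

lemma qInt_add (q : ℝ) (m k : ℕ) : qInt q (m + k) = qInt q m + q ^ m * qInt q k := by
  simp only [qInt, Finset.sum_range_add, Finset.mul_sum, pow_add]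

lemma qBinom_succ_mul {q : ℝ} (hq0 : 0 < q) (b j : ℕ) (hj : j ≤ b) :
    qBinom q (b + 1) j * qInt q (b + 1 - j) = qInt q (b + 1) * qBinom q b j := by
  have h1 : b + 1 - j = (b - j) + 1 := by omega
  have hfj := (qFact_pos hq0 j).ne'
  have hfbj := (qFact_pos hq0 (b - j)).ne'
  have hib := (qInt_pos hq0 (show 1 ≤ b + 1 by omega)).ne'
  have hibj := (qInt_pos hq0 (show 1 ≤ (b - j) + 1 by omega)).ne'
  rw [qBinom, qBinom, h1, qFact_succ, qFact_succ]
  field_simp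

lemma qBinom_mul {q : ℝ} (hq0 : 0 < q) {k m n : ℕ} (hk : k ≤ m) (hm : m ≤ n) :
    qBinom q n k * qBinom q (n - k) (m - k) = qBinom q n m * qBinom q m k := by
  have h1 : (n - k) - (m - k) = n - m := by omega
  have h2 := (qFact_pos hq0 k).ne'
  have h3 := (qFact_pos hq0 (m - k)).ne'
  have h4 := (qFact_pos hq0 (n - m)).ne'
  have h5 := (qFact_pos hq0 (n - k)).ne'
  have h6 := (qFact_pos hq0 m).ne'
  rw [qBinom, qBinom, qBinom, qBinom, h1]
  field_simp

lemma qDeriv_C_mul_X_pow (q c : ℝ) (m : ℕ) :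
    qDeriv q (Polynomial.C c * Polynomial.X ^ m)
      = Polynomial.C (c * qInt q m) * Polynomial.X ^ (m - 1) := by
  rw [qDeriv, Polynomial.C_mul_X_pow_eq_monomial, Polynomial.sum_monomial_index]
  simp

lemma qDeriv_add (q : ℝ) (p r : Polynomial ℝ) :
    qDeriv q (p + r) = qDeriv q p + qDeriv q r := by
  apply Polynomial.sum_add_index
  · intro i; simp
  · intro i b c; rw [add_mul, Polynomial.C_add, add_mul]

lemma qDeriv_finset_sum (q : ℝ) {ι : Type*} (s : Finset ι) (f : ι → Polynomial ℝ) :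
    qDeriv q (∑ i ∈ s, f i) = ∑ i ∈ s, qDeriv q (f i) := by
  classical
  induction s using Finset.cons_induction with
  | empty => simp [qDeriv]
  | cons i s hi ih => rw [Finset.sum_cons, Finset.sum_cons, qDeriv_add, ih]

lemma qDeriv_C_mul (q c : ℝ) (p : Polynomial ℝ) :
    qDeriv q (Polynomial.C c * p) = Polynomial.C c * qDeriv q p := by
  rw [qDeriv, qDeriv, ← Polynomial.smul_eq_C_mul,
    Polynomial.sum_smul_index _ _ _ (fun i => by simp)]
  simp only [Polynomial.sum, Finset.smul_sum, Polynomial.smul_eq_C_mul, ← Polynomial.C_mul,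
    ← mul_assoc]
  rw [Finset.mul_sum]
  apply Finset.sum_congr rfl
  intros
  rw [← mul_assoc, ← Polynomial.C_mul, mul_assoc]

lemma qDeriv_qAppell {q : ℝ} (hq0 : 0 < q) (a : ℕ → ℝ) (m : ℕ) :
    qDeriv q (qAppell q a (m + 1)) = Polynomial.C (qInt q (m + 1)) * qAppell q a m := by
  rw [qAppell, qDeriv_finset_sum]
  simp only [qDeriv_C_mul_X_pow]
  rw [Finset.sum_range_succ]
  simp only [Nat.sub_self, qInt_zero, mul_zero, Polynomial.C_0, zero_mul, add_zero]
  rw [qAppell, Finset.mul_sum]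
  apply Finset.sum_congr rfl
  intro j hj
  have hjm : j ≤ m := by simpa [Nat.lt_succ_iff] using hj
  have he : m + 1 - j - 1 = m - j := by omega
  have hco : qBinom q (m + 1) j * a j * qInt q (m + 1 - j)
      = qInt q (m + 1) * (qBinom q m j * a j) := by
    linear_combination (a j) * qBinom_succ_mul hq0 m j hjm
  rw [he, hco, Polynomial.C_mul, mul_assoc]

lemma qDeriv_iterate {q : ℝ} (hq0 : 0 < q) (a : ℕ → ℝ) (n : ℕ) :
    ∀ k, k ≤ n → (qDeriv q)^[k] (qAppell q a n)
      = Polynomial.C (qFact q n / qFact q (n - k)) * qAppell q a (n - k) := by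
  intro k
  induction k with
  | zero =>
    intro _
    simp [div_self (qFact_pos hq0 n).ne']
  | succ k ih =>
    intro hk
    rw [Function.iterate_succ_apply', ih (by omega), qDeriv_C_mul]
    obtain ⟨b, hb⟩ : ∃ b, n - k = b + 1 := ⟨n - (k + 1), by omega⟩
    rw [hb, qDeriv_qAppell hq0, show n - (k + 1) = b from by omega, ← mul_assoc,
      ← Polynomial.C_mul]
    congr 2
    rw [qFact_succ]
    have h1 := (qFact_pos hq0 b).ne'
    have h2 := (qInt_pos hq0 (show 1 ≤ b + 1 by omega)).ne'
    field_simp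

lemma triangle_sum {M : Type*} [AddCommMonoid M] (n : ℕ) (F : ℕ → ℕ → M) :
    ∑ k ∈ Finset.range (n + 1), ∑ j ∈ Finset.range (n + 1 - k), F k j
      = ∑ m ∈ Finset.range (n + 1), ∑ k ∈ Finset.range (m + 1), F k (m - k) := by
  rw [Finset.sum_sigma', Finset.sum_sigma']
  apply Finset.sum_nbij' (i := fun p => (⟨p.1 + p.2, p.1⟩ : Σ _ : ℕ, ℕ))
    (j := fun p => (⟨p.2, p.1 - p.2⟩ : Σ _ : ℕ, ℕ))
  · intro p hp; simp only [Finset.mem_sigma, Finset.mem_range] at *; omega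
  · intro p hp; simp only [Finset.mem_sigma, Finset.mem_range] at *; omega
  · intro p hp; simp
  · intro p hp
    obtain ⟨m, k⟩ := p
    simp only [Finset.mem_sigma, Finset.mem_range] at hp
    have h : k + (m - k) = m := by omega
    simp [h]
  · intro p hp; simp

/-- Under the structure relation for (α_n), the q-Appell polynomial A_{n,q} satisfies the
q-difference equation
`Σ_{k=0}^n (q^(n-k) α_k/[k]_q!) D_q^k A_{n,q}(x) + x q^n D_q A_{n,q}(x) − [n]_q A_{n,q}(qx) = 0`. -/
theorem qAppell_qDifference_equation (q : ℝ) (hq0 : 0 < q) (hq1 : q < 1)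
    (a : ℕ → ℝ) (ha : a 0 ≠ 0) (α : ℕ → ℝ)
    (hα : ∀ n : ℕ, qInt q n * a n
      = ∑ k ∈ Finset.range (n + 1), qBinom q n k * q ^ (n - k) * α k * a (n - k))
    (n : ℕ) (hn : 1 ≤ n) :
    (∑ k ∈ Finset.range (n + 1),
        Polynomial.C (q ^ (n - k) * α k / qFact q k) * (qDeriv q)^[k] (qAppell q a n))
      + Polynomial.C (q ^ n) * Polynomial.X * qDeriv q (qAppell q a n)
      - Polynomial.C (qInt q n) * (qAppell q a n).comp (Polynomial.C q * Polynomial.X) = 0 := by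
  -- Term 1
  have hT1 : (∑ k ∈ Finset.range (n + 1),
        Polynomial.C (q ^ (n - k) * α k / qFact q k) * (qDeriv q)^[k] (qAppell q a n))
      = ∑ m ∈ Finset.range (n + 1),
          Polynomial.C (∑ k ∈ Finset.range (m + 1),
            q ^ (n - k) * α k * qBinom q n k * (qBinom q (n - k) (m - k) * a (m - k)))
          * Polynomial.X ^ (n - m) := by
    have step1 : (∑ k ∈ Finset.range (n + 1),
        Polynomial.C (q ^ (n - k) * α k / qFact q k) * (qDeriv q)^[k] (qAppell q a n))
        = ∑ k ∈ Finset.range (n + 1), ∑ j ∈ Finset.range (n + 1 - k),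
            Polynomial.C (q ^ (n - k) * α k * qBinom q n k * (qBinom q (n - k) j * a j))
              * Polynomial.X ^ (n - k - j) := by
      apply Finset.sum_congr rfl
      intro k hk
      have hkn : k ≤ n := by simpa [Nat.lt_succ_iff] using hk
      rw [qDeriv_iterate hq0 a n k hkn, ← mul_assoc, ← Polynomial.C_mul]
      have hc : q ^ (n - k) * α k / qFact q k * (qFact q n / qFact q (n - k))
          = q ^ (n - k) * α k * qBinom q n k := by
        rw [qBinom]
        have h1 := (qFact_pos hq0 k).ne'
        have h2 := (qFact_pos hq0 (n - k)).ne'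
        field_simp
        try ring
      rw [hc, qAppell, Finset.mul_sum, show n - k + 1 = n + 1 - k from by omega]
      apply Finset.sum_congr rfl
      intro j hj
      rw [← mul_assoc, ← Polynomial.C_mul]
    rw [step1, triangle_sum n (fun k j =>
      Polynomial.C (q ^ (n - k) * α k * qBinom q n k * (qBinom q (n - k) j * a j))
        * Polynomial.X ^ (n - k - j))]
    apply Finset.sum_congr rfl
    intro m hm
    have hmn : m ≤ n := by simpa [Nat.lt_succ_iff] using hm
    rw [map_sum, Finset.sum_mul]
    apply Finset.sum_congr rfl
    intro k hk
    have hkm : k ≤ m := by simpa [Nat.lt_succ_iff] using hk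
    rw [show n - k - (m - k) = n - m from by omega]
  -- Term 2
  have hT2 : Polynomial.C (q ^ n) * Polynomial.X * qDeriv q (qAppell q a n)
      = ∑ m ∈ Finset.range (n + 1),
          Polynomial.C (q ^ n * (qBinom q n m * a m * qInt q (n - m)))
            * Polynomial.X ^ (n - m) := by
    obtain ⟨b, hb⟩ : ∃ b, n = b + 1 := ⟨n - 1, by omega⟩
    subst hb
    rw [qDeriv_qAppell hq0, Finset.sum_range_succ]
    simp only [Nat.sub_self, qInt_zero, mul_zero, zero_mul, mul_zero, Polynomial.C_0, zero_mul,
      add_zero]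
    rw [qAppell, Finset.mul_sum, Finset.mul_sum]
    apply Finset.sum_congr rfl
    intro m hm
    have hmb : m ≤ b := by simpa [Nat.lt_succ_iff] using hm
    have hc : q ^ (b + 1) * (qBinom q (b + 1) m * a m * qInt q (b + 1 - m))
        = q ^ (b + 1) * (qInt q (b + 1) * (qBinom q b m * a m)) := by
      have h := qBinom_succ_mul hq0 b m hmb
      linear_combination q ^ (b + 1) * a m * h
    rw [hc, show b + 1 - m = (b - m) + 1 from by omega, pow_succ]
    try push_cast [Polynomial.C_mul]
    try ring
  -- Term 3
  have hT3 : Polynomial.C (qInt q n) * (qAppell q a n).comp (Polynomial.C q * Polynomial.X)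
      = ∑ m ∈ Finset.range (n + 1),
          Polynomial.C (qInt q n * (qBinom q n m * a m * q ^ (n - m)))
            * Polynomial.X ^ (n - m) := by
    rw [qAppell, Polynomial.sum_comp, Finset.mul_sum]
    apply Finset.sum_congr rfl
    intro m hm
    rw [Polynomial.mul_comp, Polynomial.C_comp, Polynomial.X_pow_comp, mul_pow, ← Polynomial.C_pow]
    push_cast [Polynomial.C_mul]
    ring
  rw [hT1, hT2, hT3, ← Finset.sum_add_distrib, ← Finset.sum_sub_distrib]
  apply Finset.sum_eq_zero
  intro m hm
  have hmn : m ≤ n := by simpa [Nat.lt_succ_iff] using hm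
  rw [← add_mul, ← sub_mul, ← Polynomial.C_add, ← Polynomial.C_sub]
  have hsum : ∑ k ∈ Finset.range (m + 1),
      q ^ (n - k) * α k * qBinom q n k * (qBinom q (n - k) (m - k) * a (m - k))
      = qBinom q n m * q ^ (n - m) * (qInt q m * a m) := by
    rw [hα m, Finset.mul_sum]
    apply Finset.sum_congr rfl
    intro k hk
    have hkm : k ≤ m := by simpa [Nat.lt_succ_iff] using hk
    have hpow : q ^ (n - k) = q ^ (n - m) * q ^ (m - k) := by
      rw [← pow_add]; congr 1; omega
    have hb := qBinom_mul hq0 hkm hmn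
    rw [hpow]
    linear_combination (q ^ (n - m) * q ^ (m - k) * α k * a (m - k)) * hb
  rw [hsum]
  have hqi : qInt q n = qInt q m + q ^ m * qInt q (n - m) := by
    conv_lhs => rw [show n = m + (n - m) from by omega]
    exact qInt_add q m (n - m)
  have hqp : q ^ n = q ^ m * q ^ (n - m) := by
    rw [← pow_add]; congr 1; omega
  rw [hqi, hqp]
  have hz : qBinom q n m * q ^ (n - m) * (qInt q m * a m)
      + q ^ m * q ^ (n - m) * (qBinom q n m * a m * qInt q (n - m))
      - (qInt q m + q ^ m * qInt q (n - m)) * (qBinom q n m * a m * q ^ (n - m)) = 0 := by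
    ring
  rw [hz, Polynomial.C_0, zero_mul]
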